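/- If L′ and L″ are regular languages satisfying the partial order condition, then L′ ∩ L″ satisfies the partial order condition. -/

import Mathlib

/-- Extended transition function of a DFA. -/
def dfaEval {Q A : Type} (δ : Q → A → Q) (q : Q) (w : List A) : Q :=
  w.foldl δ q

/-- Two states are distinguishable if some string sends exactly one of them into `F`. -/
def Disting {Q A : Type} (δ : Q → A → Q) (F : Set Q) (q1 q2 : Q) : Prop :=
  ∃ z : List A, ¬ (dfaEval δ q1 z ∈ F ↔ dfaEval δ q2 z ∈ F)

/-- The partial order condition for a DFA. -/
def POC {Q A : Type} (δ : Q → A → Q) (F : Set Q) : Prop :=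
  ¬ ∃ (q1 q2 : Q) (x y : List A), q1 ≠ q2 ∧ Disting δ F q1 q2 ∧ x ≠ [] ∧ y ≠ [] ∧
      dfaEval δ q1 x = q2 ∧ dfaEval δ q2 x = q2 ∧ dfaEval δ q2 y = q1

/-- A language is regular: accepted by some finite DFA. -/
def RegularLang {A : Type} (L : Set (List A)) : Prop :=
  ∃ (n : ℕ) (δ : Fin n → A → Fin n) (q0 : Fin n) (F : Set (Fin n)),
    ∀ w, w ∈ L ↔ dfaEval δ q0 w ∈ F

/-- A language satisfies the partial order condition if its minimal DFA does —
formalized as: every finite DFA accepting it with all states reachable and distinct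
states distinguishable satisfies the partial order condition. -/
def LangPOC {A : Type} (L : Set (List A)) : Prop :=
  ∀ (n : ℕ) (δ : Fin n → A → Fin n) (q0 : Fin n) (F : Set (Fin n)),
    (∀ w, w ∈ L ↔ dfaEval δ q0 w ∈ F) →
    (∀ q : Fin n, ∃ s : List A, dfaEval δ q0 s = q) →
    (∀ p q : Fin n, p ≠ q → Disting δ F p q) →
    POC δ F

theorem dfaEval_append {Q A : Type} (δ : Q → A → Q) (q : Q) (u v : List A) :
    dfaEval δ q (u ++ v) = dfaEval δ (dfaEval δ q u) v :=
  List.foldl_append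

theorem dfaEval_cons {Q A : Type} (δ : Q → A → Q) (q : Q) (a : A) (w : List A) :
    dfaEval δ q (a :: w) = dfaEval δ (δ q a) w := rfl

def wpow {A : Type} (w : List A) : ℕ → List A
  | 0 => []
  | k+1 => w ++ wpow w k

theorem dfaEval_wpow {Q A : Type} (δ : Q → A → Q) (w : List A) (k : ℕ) (q : Q) :
    dfaEval δ q (wpow w k) = (fun s => dfaEval δ s w)^[k] q := by
  induction k generalizing q with
  | zero => rfl
  | succ k ih =>
    rw [wpow, dfaEval_append, ih, Function.iterate_succ_apply]

theorem dfaEval_wpow_fixed {Q A : Type} (δ : Q → A → Q) (w : List A) (k : ℕ) (q : Q)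
    (h : dfaEval δ q w = q) : dfaEval δ q (wpow w k) = q := by
  induction k with
  | zero => rfl
  | succ k ih => rw [wpow, dfaEval_append, h, ih]

theorem exists_idem_iter {Q : Type} [Finite Q] (g : Q → Q) :
    ∃ K, 1 ≤ K ∧ ∀ q, g^[K] (g^[K] q) = g^[K] q := by
  obtain ⟨i, j, hne, heq⟩ := Finite.exists_ne_map_eq_of_infinite (fun k : ℕ => g^[k])
  wlog hij : i < j generalizing i j
  · exact this j i hne.symm heq.symm (by omega)
  obtain ⟨p, hp1, rfl⟩ : ∃ p, 1 ≤ p ∧ j = i + p := ⟨j - i, by omega, by omega⟩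
  have hstep : ∀ k, i ≤ k → g^[k + p] = g^[k] := by
    intro k hk
    obtain ⟨d, rfl⟩ : ∃ d, k = d + i := ⟨k - i, by omega⟩
    rw [Nat.add_assoc, Function.iterate_add, ← heq, ← Function.iterate_add]
  have key : ∀ t k, i ≤ k → g^[k + t * p] = g^[k] := by
    intro t
    induction t with
    | zero => intro k hk; simp
    | succ t ih =>
      intro k hk
      have h3 : k + (t + 1) * p = (k + p) + t * p := by ring
      rw [h3, ih _ (by omega), hstep _ hk]
  have hKi : i ≤ p * (i + 1) := by nlinarith
  refine ⟨p * (i + 1), Nat.one_le_iff_ne_zero.mpr (by positivity), fun q => ?_⟩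
  have h2 : g^[p * (i+1)] ∘ g^[p * (i+1)] = g^[p * (i+1)] := by
    rw [← Function.iterate_add]
    have h4 : p * (i + 1) + p * (i + 1) = p * (i+1) + (i+1) * p := by ring
    rw [h4, key (i+1) _ hKi]
  exact congrFun h2 q

theorem dfaEval_prod_eq {Q1 Q2 A : Type} (δ1 : Q1 → A → Q1) (δ2 : Q2 → A → Q2)
    (δp : Q1 × Q2 → A → Q1 × Q2) (h : ∀ st a, δp st a = (δ1 st.1 a, δ2 st.2 a))
    (st : Q1 × Q2) (w : List A) :
    dfaEval δp st w = (dfaEval δ1 st.1 w, dfaEval δ2 st.2 w) := by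
  induction w generalizing st with
  | nil => rfl
  | cons a w ih =>
    rw [dfaEval_cons, dfaEval_cons, dfaEval_cons, ih, h]

theorem exists_min_dfa {A : Type} (L : Set (List A)) (hreg : RegularLang L) :
    ∃ (m : ℕ) (δ : Fin m → A → Fin m) (q0 : Fin m) (F : Set (Fin m)),
      (∀ w, w ∈ L ↔ dfaEval δ q0 w ∈ F) ∧
      (∀ q, ∃ s, dfaEval δ q0 s = q) ∧
      (∀ p q, p ≠ q → Disting δ F p q) := by
  classical
  obtain ⟨n, δ, q0, F, hacc⟩ := hreg
  -- reachable states
  let R := {q : Fin n // ∃ s, dfaEval δ q0 s = q}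
  let st : Setoid R :=
    ⟨fun r₁ r₂ => ∀ z, (dfaEval δ r₁.1 z ∈ F ↔ dfaEval δ r₂.1 z ∈ F),
     ⟨fun _ _ => Iff.rfl, fun h z => (h z).symm, fun h₁ h₂ z => (h₁ z).trans (h₂ z)⟩⟩
  -- reachability is preserved by transitions
  have reachδ : ∀ (r : R) (a : A), ∃ s, dfaEval δ q0 s = δ r.1 a := by
    rintro ⟨q, s, hs⟩ a
    exact ⟨s ++ [a], by rw [dfaEval_append, hs]; rfl⟩
  have reachEval : ∀ (r : R) (w : List A), ∃ s, dfaEval δ q0 s = dfaEval δ r.1 w := by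
    rintro ⟨q, s, hs⟩ w
    exact ⟨s ++ w, by rw [dfaEval_append, hs]⟩
  -- quotient transition
  let δQ : Quotient st → A → Quotient st := fun c a =>
    Quotient.lift (fun r : R => (⟦⟨δ r.1 a, reachδ r a⟩⟧ : Quotient st))
      (by
        intro r₁ r₂ h
        apply Quotient.sound
        intro z
        have := h (a :: z)
        rwa [dfaEval_cons, dfaEval_cons] at this) c
  let q0Q : Quotient st := ⟦⟨q0, ⟨[], rfl⟩⟩⟧
  let FQ : Set (Quotient st) :=
    {c | Quotient.lift (fun r : R => r.1 ∈ F)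
      (by intro r₁ r₂ h; exact propext (h [])) c}
  have memFQ : ∀ r : R, (⟦r⟧ : Quotient st) ∈ FQ ↔ r.1 ∈ F := fun r => Iff.rfl
  have evalQ : ∀ (w : List A) (r : R),
      dfaEval δQ ⟦r⟧ w = ⟦⟨dfaEval δ r.1 w, reachEval r w⟩⟧ := by
    intro w
    induction w with
    | nil => intro r; rfl
    | cons a w ih =>
      intro r
      rw [dfaEval_cons]
      show dfaEval δQ (δQ ⟦r⟧ a) w = _
      have h1 : δQ ⟦r⟧ a = ⟦⟨δ r.1 a, reachδ r a⟩⟧ := rfl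
      rw [h1, ih]
      rfl
  -- finiteness
  obtain ⟨m, ⟨ε⟩⟩ := Finite.exists_equiv_fin (Quotient st)
  have evalm : ∀ (w : List A) (c : Quotient st),
      dfaEval (fun q a => ε (δQ (ε.symm q) a)) (ε c) w = ε (dfaEval δQ c w) := by
    intro w
    induction w with
    | nil => intro c; rfl
    | cons a w ih =>
      intro c
      rw [dfaEval_cons, dfaEval_cons]
      show dfaEval _ (ε (δQ (ε.symm (ε c)) a)) w = _
      rw [ε.symm_apply_apply, ih]
  refine ⟨m, fun q a => ε (δQ (ε.symm q) a), ε q0Q, {q | ε.symm q ∈ FQ}, ?_, ?_, ?_⟩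
  · -- acceptance
    intro w
    rw [hacc w]
    show _ ↔ _ ∈ {q | ε.symm q ∈ FQ}
    rw [Set.mem_setOf_eq, evalm, ε.symm_apply_apply, evalQ]
    exact Iff.rfl
  · -- reachability
    intro q
    obtain ⟨r, hr⟩ := Quotient.exists_rep (ε.symm q)
    obtain ⟨s, hs⟩ := r.2
    refine ⟨s, ?_⟩
    have h0 : ε q0Q = ε (⟦⟨q0, ⟨[], rfl⟩⟩⟧ : Quotient st) := rfl
    rw [h0, evalm, evalQ]
    have h1 : (⟨dfaEval δ q0 s, reachEval ⟨q0, ⟨[], rfl⟩⟩ s⟩ : R) = r := Subtype.ext hs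
    rw [h1, hr, ε.apply_symm_apply]
  · -- distinguishability
    intro p q hpq
    obtain ⟨r₁, hr₁⟩ := Quotient.exists_rep (ε.symm p)
    obtain ⟨r₂, hr₂⟩ := Quotient.exists_rep (ε.symm q)
    have hne : ¬ (∀ z, (dfaEval δ r₁.1 z ∈ F ↔ dfaEval δ r₂.1 z ∈ F)) := by
      intro hall
      apply hpq
      have : (⟦r₁⟧ : Quotient st) = ⟦r₂⟧ := Quotient.sound hall
      rw [hr₁, hr₂] at this
      exact ε.symm.injective this
    obtain ⟨z, hz⟩ := not_forall.mp hne
    refine ⟨z, ?_⟩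
    have hp' : dfaEval (fun q a => ε (δQ (ε.symm q) a)) p z
        = ε (dfaEval δQ ⟦r₁⟧ z) := by rw [hr₁, ← evalm, ε.apply_symm_apply]
    have hq' : dfaEval (fun q a => ε (δQ (ε.symm q) a)) q z
        = ε (dfaEval δQ ⟦r₂⟧ z) := by rw [hr₂, ← evalm, ε.apply_symm_apply]
    intro hiff
    apply hz
    simp only [Set.mem_setOf_eq, hp', hq', Equiv.symm_apply_apply, evalQ] at hiff
    exact hiff

/-- if regular languages `L′` and `L″` satisfy the partial order
condition, then so does `L′ ∩ L″`. -/
theorem partial_order_condition_closed_under_intersection {A : Type}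
    (L' L'' : Set (List A)) (hreg' : RegularLang L') (hreg'' : RegularLang L'')
    (h' : LangPOC L') (h'' : LangPOC L'') :
    LangPOC (L' ∩ L'') := by
  intro n δ q0 F hacc hreach hdist
  rintro ⟨q1, q2, x, y, hne, hdq, hxne, hyne, e1, e2, e3⟩
  obtain ⟨n1, δ1, r1, F1, ha1, hr1, hd1⟩ := exists_min_dfa L' hreg'
  obtain ⟨n2, δ2, r2, F2, ha2, hr2, hd2⟩ := exists_min_dfa L'' hreg''
  have POC1 := h' n1 δ1 r1 F1 ha1 hr1 hd1
  have POC2 := h'' n2 δ2 r2 F2 ha2 hr2 hd2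
  obtain ⟨s, hs⟩ := hreach q1
  let P := Fin n1 × Fin n2
  let δp : P → A → P := fun st a => (δ1 st.1 a, δ2 st.2 a)
  have hprod : ∀ (st : P) (w : List A),
      dfaEval δp st w = (dfaEval δ1 st.1 w, dfaEval δ2 st.2 w) :=
    dfaEval_prod_eq δ1 δ2 δp (fun _ _ => rfl)
  let g : P → P := fun st => dfaEval δp st x
  obtain ⟨K, hK1, hKid⟩ := exists_idem_iter g
  obtain ⟨K', rfl⟩ : ∃ K', K = K' + 1 := ⟨K - 1, by omega⟩
  let X := wpow x (K' + 1)
  have hXeq : X = x ++ wpow x K' := rfl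
  have hXne : X ≠ [] := by
    rw [hXeq]; intro h; exact hxne (List.append_eq_nil_iff.mp h).1
  have evalX : ∀ st : P, dfaEval δp st X = g^[K' + 1] st := fun st =>
    dfaEval_wpow δp x (K' + 1) st
  let f : P → P := fun st => dfaEval δp (g^[K' + 1] st) y
  obtain ⟨m, hm1, hmid⟩ := exists_idem_iter f
  obtain ⟨m', rfl⟩ : ∃ m', m = m' + 1 := ⟨m - 1, by omega⟩
  let V := X ++ y
  have evalV : (fun st : P => dfaEval δp st V) = f := by
    funext st
    show dfaEval δp st (X ++ y) = f st
    rw [dfaEval_append, evalX]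
  have evalVpow : ∀ (k : ℕ) (st : P), dfaEval δp st (wpow V k) = f^[k] st := by
    intro k st
    rw [dfaEval_wpow, evalV]
  let Y := y ++ wpow V m'
  have hYne : Y ≠ [] := by
    show y ++ wpow V m' ≠ []
    intro h; exact hyne (List.append_eq_nil_iff.mp h).1
  let q0p : P := (r1, r2)
  let A0 := dfaEval δp q0p s
  let R1 := f^[m' + 1] A0
  let R2 := g^[K' + 1] R1
  have hR1X : dfaEval δp R1 X = R2 := evalX R1
  have hR2X : dfaEval δp R2 X = R2 := by rw [evalX]; exact hKid R1
  have hR2Y : dfaEval δp R2 Y = R1 := by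
    show dfaEval δp R2 (y ++ wpow V m') = R1
    rw [dfaEval_append]
    have h1 : dfaEval δp R2 y = f R1 := rfl
    rw [h1, evalVpow, ← Function.iterate_succ_apply]
    show f^[m' + 1] (f^[m' + 1] A0) = R1
    exact hmid A0
  -- behaviour in the original DFA
  have hq2X : dfaEval δ q2 X = q2 := dfaEval_wpow_fixed δ x (K' + 1) q2 e2
  have hq1X : dfaEval δ q1 X = q2 := by
    rw [hXeq, dfaEval_append, e1]
    exact dfaEval_wpow_fixed δ x K' q2 e2
  have hq1V : dfaEval δ q1 V = q1 := by
    show dfaEval δ q1 (X ++ y) = q1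
    rw [dfaEval_append, hq1X, e3]
  have hq2Y : dfaEval δ q2 Y = q1 := by
    show dfaEval δ q2 (y ++ wpow V m') = q1
    rw [dfaEval_append, e3]
    exact dfaEval_wpow_fixed δ V m' q1 hq1V
  let S1 := s ++ wpow V (m' + 1)
  have hS1M : dfaEval δ q0 S1 = q1 := by
    show dfaEval δ q0 (s ++ wpow V (m' + 1)) = q1
    rw [dfaEval_append, hs]
    exact dfaEval_wpow_fixed δ V (m' + 1) q1 hq1V
  have hS1P : dfaEval δp q0p S1 = R1 := by
    show dfaEval δp q0p (s ++ wpow V (m' + 1)) = R1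
    rw [dfaEval_append, evalVpow]
  let S2 := S1 ++ X
  have hS2M : dfaEval δ q0 S2 = q2 := by
    show dfaEval δ q0 (S1 ++ X) = q2
    rw [dfaEval_append, hS1M, hq1X]
  have hS2P : dfaEval δp q0p S2 = R2 := by
    show dfaEval δp q0p (S1 ++ X) = R2
    rw [dfaEval_append, hS1P, hR1X]
  have memP : ∀ w : List A, w ∈ L' ∩ L'' ↔
      ((dfaEval δp q0p w).1 ∈ F1 ∧ (dfaEval δp q0p w).2 ∈ F2) := by
    intro w
    rw [Set.mem_inter_iff, ha1 w, ha2 w, hprod]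
  by_cases hRR : R1 = R2
  · obtain ⟨z, hz⟩ := hdq
    apply hz
    have k1 : dfaEval δ q1 z ∈ F ↔ (S1 ++ z) ∈ L' ∩ L'' := by
      rw [hacc, dfaEval_append, hS1M]
    have k2 : dfaEval δ q2 z ∈ F ↔ (S2 ++ z) ∈ L' ∩ L'' := by
      rw [hacc, dfaEval_append, hS2M]
    have k3 : (S1 ++ z) ∈ L' ∩ L'' ↔ (S2 ++ z) ∈ L' ∩ L'' := by
      rw [memP, memP, dfaEval_append δp q0p S1 z, dfaEval_append δp q0p S2 z,
        hS1P, hS2P, hRR]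
    rw [k1, k3, ← k2]
  · have hcomp : R1.1 ≠ R2.1 ∨ R1.2 ≠ R2.2 := by
      by_contra hc
      push_neg at hc
      exact hRR (Prod.ext hc.1 hc.2)
    rw [hprod] at hR1X hR2X hR2Y
    rcases hcomp with h1 | h2
    · exact POC1 ⟨R1.1, R2.1, X, Y, h1, hd1 _ _ h1, hXne, hYne,
        congrArg Prod.fst hR1X, congrArg Prod.fst hR2X, congrArg Prod.fst hR2Y⟩
    · exact POC2 ⟨R1.2, R2.2, X, Y, h2, hd2 _ _ h2, hXne, hYne,
        congrArg Prod.snd hR1X, congrArg Prod.snd hR2X, congrArg Prod.snd hR2Y⟩
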